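/- arXiv:cs/0309014 — 2 statements merged into one kernel-verified Lean document; each statement's English description precedes it below -/
import Mathlib

section
/- Let C₁ and C₂ be cycles with t₁ and t₂ turns respectively, and suppose some pixel p is covered by both C₁ and C₂. Then there exists a single cycle covering exactly the union of the pixel sets covered by C₁ and C₂ that has at most t₁ + t₂ + 2 turns. -/
/-- A pixel is a point of `ℤ × ℤ`. -/
abbrev Pixel : Type := ℤ × ℤ

/-- Two pixels are adjacent if their ℓ¹-distance is 1. -/
def Adjacent (p q : Pixel) : Prop := |p.1 - q.1| + |p.2 - q.2| = 1

/-- A cycle: a cyclic sequence of `k ≥ 2` pixels (encoded as a `k`-periodic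
function on `ℤ`) in which consecutive pixels are adjacent. -/
structure GridCycle where
  k : ℕ
  two_le : 2 ≤ k
  pts : ℤ → Pixel
  periodic : ∀ i : ℤ, pts (i + k) = pts i
  adj : ∀ i : ℤ, Adjacent (pts i) (pts (i + 1))

/-- The set of pixels covered by a cycle. -/
def GridCycle.covers (C : GridCycle) : Set Pixel := Set.range C.pts

/-- Turn cost at position `i`: 0 if the walk goes straight, 2 for a U-turn,
1 for a 90° turn. -/
def GridCycle.turnCost (C : GridCycle) (i : ℤ) : ℕ :=
  if C.pts (i + 1) - C.pts i = C.pts i - C.pts (i - 1) then 0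
  else if C.pts (i + 1) - C.pts i = -(C.pts i - C.pts (i - 1)) then 2
  else 1

/-- The number of turns of a cycle: total turn cost over all positions. -/
def GridCycle.turns (C : GridCycle) : ℕ :=
  ∑ i ∈ Finset.range C.k, C.turnCost (i : ℤ)

/-- A set of pixels is connected under adjacency. -/
def ConnectedIn (P : Set Pixel) : Prop :=
  ∀ p ∈ P, ∀ q ∈ P, Relation.ReflTransGen (fun a b => b ∈ P ∧ Adjacent a b) p q

/-- A region is a finite nonempty set of pixels connected under adjacency. -/
def IsRegion (P : Set Pixel) : Prop := P.Finite ∧ P.Nonempty ∧ ConnectedIn P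

/-- A tour of `P`: a cycle whose pixels lie in `P` covering every pixel of `P`. -/
def IsTour (P : Set Pixel) (C : GridCycle) : Prop := C.covers = P

/-- A cycle cover of `P`: a finite collection of cycles with pixels in `P`
covering every pixel of `P`. -/
def IsCycleCover (P : Set Pixel) (CC : List GridCycle) : Prop :=
  (∀ C ∈ CC, C.covers ⊆ P) ∧ ∀ p ∈ P, ∃ C ∈ CC, p ∈ C.covers

/-- The number of turns of a cycle cover. -/
def coverTurns (CC : List GridCycle) : ℕ := (CC.map GridCycle.turns).sum

/-- A horizontal strip of `P`: a maximal horizontal run of pixels of `P`. -/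
def IsHStrip (P S : Set Pixel) : Prop :=
  ∃ x y : ℤ, ∃ ℓ : ℕ, S = {p : Pixel | p.2 = y ∧ x ≤ p.1 ∧ p.1 ≤ x + (ℓ : ℤ)} ∧
    S ⊆ P ∧ (x - 1, y) ∉ P ∧ (x + (ℓ : ℤ) + 1, y) ∉ P

/-- A vertical strip of `P`: a maximal vertical run of pixels of `P`. -/
def IsVStrip (P S : Set Pixel) : Prop :=
  ∃ x y : ℤ, ∃ ℓ : ℕ, S = {p : Pixel | p.1 = x ∧ y ≤ p.2 ∧ p.2 ≤ y + (ℓ : ℤ)} ∧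
    S ⊆ P ∧ (x, y - 1) ∉ P ∧ (x, y + (ℓ : ℤ) + 1) ∉ P

/-- A strip of `P` is a horizontal or vertical strip. -/
def IsStrip (P S : Set Pixel) : Prop := IsHStrip P S ∨ IsVStrip P S

/-- A strip cover of `P`: a set of strips of `P` whose union is `P`. -/
def IsStripCover (P : Set Pixel) (F : Set (Set Pixel)) : Prop :=
  (∀ S ∈ F, IsStrip P S) ∧ ⋃₀ F = P

/-- The minimum size of a strip cover of `P`. -/
noncomputable def minStripCover (P : Set Pixel) : ℕ :=
  sInf {m | ∃ F, IsStripCover P F ∧ F.ncard = m}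

/-- A rook placement in `P`: a subset of `P` no two distinct elements of which
lie in a common strip of `P`. -/
def IsRookPlacement (P R : Set Pixel) : Prop :=
  R ⊆ P ∧ ∀ p ∈ R, ∀ q ∈ R, p ≠ q → ¬∃ S, IsStrip P S ∧ p ∈ S ∧ q ∈ S

/-- A maximal rook placement: every pixel of `P` lies in a common strip with
some element of `R`. -/
def IsMaximalRookPlacement (P R : Set Pixel) : Prop :=
  IsRookPlacement P R ∧ ∀ p ∈ P, ∃ r ∈ R, ∃ S, IsStrip P S ∧ p ∈ S ∧ r ∈ S

def cost (u v : Pixel) : ℕ := if v = u then 0 else if v = -u then 2 else 1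

lemma turnCost_eq_cost (C : GridCycle) (i : ℤ) :
    C.turnCost i = cost (C.pts i - C.pts (i-1)) (C.pts (i+1) - C.pts i) := rfl

lemma cost_neg_comm (u v : Pixel) : cost (-v) (-u) = cost u v := by
  unfold cost
  simp only [show (-u = -v) ↔ (v = u) from by rw [neg_inj, eq_comm],
    show (-u = -(-v)) ↔ (v = -u) from by rw [neg_neg]; exact eq_comm]

lemma adjacent_comm {p q : Pixel} (h : Adjacent p q) : Adjacent q p := by
  unfold Adjacent at *
  rw [abs_sub_comm q.1, abs_sub_comm q.2]; exact h

lemma unitVec_cases {p q : Pixel} (h : Adjacent p q) :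
    q - p = ((1:ℤ),(0:ℤ)) ∨ q - p = (-1,0) ∨ q - p = (0,1) ∨ q - p = (0,-1) := by
  obtain ⟨p1, p2⟩ := p; obtain ⟨q1, q2⟩ := q
  unfold Adjacent at h; simp only at h
  simp only [Prod.mk_sub_mk, Prod.mk.injEq]
  rcases abs_cases (p1 - q1) with ⟨h1, _⟩ | ⟨h1, _⟩ <;>
    rcases abs_cases (p2 - q2) with ⟨h2, _⟩ | ⟨h2, _⟩ <;> omega

lemma key (u v w x : Pixel)
    (hu : u = ((1:ℤ),(0:ℤ)) ∨ u = (-1,0) ∨ u = (0,1) ∨ u = (0,-1))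
    (hv : v = ((1:ℤ),(0:ℤ)) ∨ v = (-1,0) ∨ v = (0,1) ∨ v = (0,-1))
    (hw : w = ((1:ℤ),(0:ℤ)) ∨ w = (-1,0) ∨ w = (0,1) ∨ w = (0,-1))
    (hx : x = ((1:ℤ),(0:ℤ)) ∨ x = (-1,0) ∨ x = (0,1) ∨ x = (0,-1)) :
    cost w v + cost u x ≤ cost u v + cost w x + 2 ∨
    cost (-x) v + cost u (-w) ≤ cost u v + cost w x + 2 := by
  rcases hu with rfl|rfl|rfl|rfl <;> rcases hv with rfl|rfl|rfl|rfl <;>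
    rcases hw with rfl|rfl|rfl|rfl <;> rcases hx with rfl|rfl|rfl|rfl <;> decide

lemma window_sum (f : ℤ → ℕ) (k : ℕ) (hf : ∀ i : ℤ, f (i + k) = f i) (a : ℤ) :
    ∑ i ∈ Finset.range k, f (a + i) = ∑ i ∈ Finset.range k, f i := by
  have step : ∀ c : ℤ, ∑ i ∈ Finset.range k, f (c + 1 + i) = ∑ i ∈ Finset.range k, f (c + i) := by
    intro c
    cases k with
    | zero => simp
    | succ m =>
      rw [Finset.sum_range_succ, Finset.sum_range_succ']
      have h1 : ∀ i : ℕ, i < m → f (c + 1 + i) = f (c + (i+1:ℕ)) := by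
        intro i _; congr 1; push_cast; ring
      have h2 : f (c + 1 + m) = f (c + 0) := by
        have : (c + 1 + (m:ℤ)) = (c + 0) + (m+1:ℕ) := by push_cast; ring
        rw [this, hf]
      rw [Finset.sum_congr rfl (fun i hi => h1 i (Finset.mem_range.mp hi)), h2]
      norm_num
  have main : ∀ a : ℤ, ∑ i ∈ Finset.range k, f (a + i) = ∑ i ∈ Finset.range k, f (0 + i) := by
    intro a
    induction a using Int.induction_on with
    | zero => rfl
    | succ n ih => rw [show ((n:ℤ)+1) = (n:ℤ) + 1 from rfl, step, ih]
    | pred n ih => rw [← ih, ← step]; norm_num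
  rw [main a]; simp

lemma GridCycle.pts_sub (C : GridCycle) (i : ℤ) : C.pts (i - C.k) = C.pts i := by
  have := C.periodic (i - C.k); rw [sub_add_cancel] at this; exact this.symm

lemma GridCycle.pts_add_mul (C : GridCycle) (n i : ℤ) : C.pts (i + n * C.k) = C.pts i := by
  induction n using Int.induction_on with
  | zero => simp
  | succ n ih =>
    have : i + ((n:ℤ)+1) * C.k = (i + n * C.k) + C.k := by ring
    rw [this, C.periodic, ih]
  | pred n ih =>
    have : i + (-(n:ℤ)-1) * C.k = (i + (-(n:ℤ)) * C.k) - C.k := by ring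
    rw [this, C.pts_sub, ih]

lemma GridCycle.pts_congr (C : GridCycle) {i j : ℤ} (h : i % (C.k:ℤ) = j % (C.k:ℤ)) :
    C.pts i = C.pts j := by
  have hi : C.pts i = C.pts (i % (C.k:ℤ)) := by
    have : i = i % (C.k:ℤ) + (i / (C.k:ℤ)) * C.k := by
      rw [mul_comm]; exact (Int.emod_add_mul_ediv i C.k).symm
    conv_lhs => rw [this]
    exact C.pts_add_mul _ _
  have hj : C.pts j = C.pts (j % (C.k:ℤ)) := by
    have : j = j % (C.k:ℤ) + (j / (C.k:ℤ)) * C.k := by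
      rw [mul_comm]; exact (Int.emod_add_mul_ediv j C.k).symm
    conv_lhs => rw [this]
    exact C.pts_add_mul _ _
  rw [hi, hj, h]

lemma GridCycle.turnCost_periodic (C : GridCycle) (i : ℤ) :
    C.turnCost (i + C.k) = C.turnCost i := by
  unfold GridCycle.turnCost
  rw [show i + (C.k:ℤ) + 1 = (i+1) + C.k from by ring, show i + (C.k:ℤ) - 1 = (i-1) + C.k from by ring,
    C.periodic, C.periodic, C.periodic]

/-- The reversed cycle. -/
def GridCycle.rev (C : GridCycle) : GridCycle where
  k := C.k
  two_le := C.two_le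
  pts i := C.pts (-i)
  periodic i := by
    show C.pts (-(i + C.k)) = C.pts (-i)
    simp only [neg_add]
    rw [show -i + -(C.k:ℤ) = -i - C.k from by ring, C.pts_sub]
  adj i := by
    have h := C.adj (-i - 1)
    rw [show -i - 1 + 1 = -i from by ring] at h
    show Adjacent (C.pts (-i)) (C.pts (-(i+1)))
    rw [show -(i+1) = -i - 1 from by ring]
    exact adjacent_comm h

lemma GridCycle.rev_covers (C : GridCycle) : C.rev.covers = C.covers := by
  unfold GridCycle.covers GridCycle.rev
  ext x
  constructor
  · rintro ⟨i, rfl⟩; exact ⟨-i, rfl⟩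
  · rintro ⟨i, rfl⟩; exact ⟨-i, by simp⟩

lemma GridCycle.rev_pts (C : GridCycle) (i : ℤ) : C.rev.pts i = C.pts (-i) := rfl

lemma GridCycle.rev_turnCost (C : GridCycle) (i : ℤ) :
    C.rev.turnCost i = C.turnCost (-i) := by
  rw [turnCost_eq_cost, turnCost_eq_cost, C.rev_pts, C.rev_pts, C.rev_pts]
  rw [show -(i-1) = -i + 1 from by ring, show -(i+1) = -i - 1 from by ring]
  rw [show C.pts (-i) - C.pts (-i+1) = -(C.pts (-i+1) - C.pts (-i)) from by ring,
      show C.pts (-i-1) - C.pts (-i) = -(C.pts (-i) - C.pts (-i-1)) from by ring]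
  exact cost_neg_comm _ _

lemma GridCycle.rev_turns (C : GridCycle) : C.rev.turns = C.turns := by
  unfold GridCycle.turns
  have hk : C.rev.k = C.k := rfl
  rw [hk]
  have h1 : ∀ i ∈ Finset.range C.k, C.rev.turnCost (i:ℤ) = C.turnCost (-(i:ℤ)) :=
    fun i _ => C.rev_turnCost i
  rw [Finset.sum_congr rfl h1]
  have h2 : ∀ j ∈ Finset.range C.k, C.turnCost (-((C.k - 1 - j : ℕ):ℤ)) =
      C.turnCost ((1 - (C.k:ℤ)) + j) := by
    intro j hj
    congr 1
    have hj' := Finset.mem_range.mp hj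
    push_cast [Nat.cast_sub, Nat.sub_sub]
    omega
  calc ∑ i ∈ Finset.range C.k, C.turnCost (-(i:ℤ))
      = ∑ j ∈ Finset.range C.k, C.turnCost (-((C.k - 1 - j : ℕ):ℤ)) :=
        (Finset.sum_range_reflect _ _).symm
    _ = ∑ j ∈ Finset.range C.k, C.turnCost ((1 - (C.k:ℤ)) + j) := Finset.sum_congr rfl h2
    _ = ∑ j ∈ Finset.range C.k, C.turnCost (j:ℤ) := window_sum _ _ C.turnCost_periodic _

section Merge
variable (C₁ C₂ : GridCycle) (a b : ℤ)

/-- Points of the merged cycle. -/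
def mergePts : ℤ → Pixel := fun i =>
  if i % ((C₁.k : ℤ) + C₂.k) < C₁.k then C₁.pts (a + i % ((C₁.k:ℤ) + C₂.k))
  else C₂.pts (b + i % ((C₁.k:ℤ) + C₂.k) - C₁.k)

lemma mergePts_congr {i j : ℤ} (hij : i % ((C₁.k:ℤ) + C₂.k) = j % ((C₁.k:ℤ) + C₂.k)) :
    mergePts C₁ C₂ a b i = mergePts C₁ C₂ a b j := by
  unfold mergePts; rw [hij]

lemma mergePts_left (h : C₁.pts a = C₂.pts b) : ∀ i : ℤ, 0 ≤ i → i ≤ (C₁.k:ℤ) →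
    mergePts C₁ C₂ a b i = C₁.pts (a + i) := by
  intro i h0 h1
  have h2 := C₁.two_le
  have h3 := C₂.two_le
  rcases lt_or_eq_of_le h1 with hc | hc
  · have he : i % ((C₁.k:ℤ) + C₂.k) = i := Int.emod_eq_of_lt h0 (by omega)
    unfold mergePts
    rw [he, if_pos hc]
  · subst hc
    have he : (C₁.k:ℤ) % ((C₁.k:ℤ) + C₂.k) = C₁.k := Int.emod_eq_of_lt (by omega) (by omega)
    unfold mergePts
    rw [he, if_neg (lt_irrefl _), show b + (C₁.k:ℤ) - C₁.k = b from by ring,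
      show a + (C₁.k:ℤ) = a + 1 * C₁.k from by ring, C₁.pts_add_mul, h]

lemma mergePts_right (h : C₁.pts a = C₂.pts b) : ∀ i : ℤ, (C₁.k:ℤ) ≤ i → i ≤ (C₁.k:ℤ) + C₂.k →
    mergePts C₁ C₂ a b i = C₂.pts (b + i - C₁.k) := by
  intro i h0 h1
  have h2 := C₁.two_le
  have h3 := C₂.two_le
  rcases lt_or_eq_of_le h1 with hc | hc
  · have he : i % ((C₁.k:ℤ) + C₂.k) = i := Int.emod_eq_of_lt (by omega) hc
    unfold mergePts
    rw [he, if_neg (by omega)]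
  · subst hc
    have he : ((C₁.k:ℤ) + C₂.k) % ((C₁.k:ℤ) + C₂.k) = 0 := Int.emod_self
    unfold mergePts
    rw [he, if_pos (by omega), add_zero, h,
      show b + ((C₁.k:ℤ) + C₂.k) - C₁.k = b + 1 * C₂.k from by ring, C₂.pts_add_mul]

/-- The merged cycle. -/
def mergeCycle (h : C₁.pts a = C₂.pts b) : GridCycle where
  k := C₁.k + C₂.k
  two_le := le_trans C₁.two_le (Nat.le_add_right _ _)
  pts := mergePts C₁ C₂ a b
  periodic i := by
    apply mergePts_congr
    push_cast
    rw [show i + ((C₁.k:ℤ) + C₂.k) = i + ((C₁.k:ℤ) + C₂.k) * 1 from by ring,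
      Int.add_mul_emod_self_left]
  adj i := by
    have h2 := C₁.two_le
    have h3 := C₂.two_le
    have hK : (0:ℤ) < (C₁.k:ℤ) + C₂.k := by omega
    set r := i % ((C₁.k:ℤ) + C₂.k) with hr
    have hr0 : 0 ≤ r := Int.emod_nonneg i (by omega)
    have hrK : r < (C₁.k:ℤ) + C₂.k := Int.emod_lt_of_pos i hK
    have e1 : mergePts C₁ C₂ a b i = mergePts C₁ C₂ a b r :=
      mergePts_congr _ _ _ _ (by rw [hr, Int.emod_emod_of_dvd _ dvd_rfl])
    have e2 : mergePts C₁ C₂ a b (i+1) = mergePts C₁ C₂ a b (r+1) := by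
      apply mergePts_congr
      conv_lhs => rw [Int.add_emod]
      conv_rhs => rw [Int.add_emod, hr, Int.emod_emod_of_dvd _ dvd_rfl]
    show Adjacent (mergePts C₁ C₂ a b i) (mergePts C₁ C₂ a b (i+1))
    rw [e1, e2]
    rcases lt_or_ge r (C₁.k:ℤ) with hc | hc
    · rw [mergePts_left C₁ C₂ a b h r hr0 (le_of_lt hc),
        mergePts_left C₁ C₂ a b h (r+1) (by omega) (by omega)]
      have := C₁.adj (a + r)
      rwa [show a + r + 1 = a + (r+1) from by ring] at this
    · rw [mergePts_right C₁ C₂ a b h r hc (le_of_lt hrK),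
        mergePts_right C₁ C₂ a b h (r+1) (by omega) (by omega)]
      have := C₂.adj (b + r - C₁.k)
      rwa [show b + r - (C₁.k:ℤ) + 1 = b + (r+1) - C₁.k from by ring] at this


lemma mergeCycle_covers (h : C₁.pts a = C₂.pts b) :
    (mergeCycle C₁ C₂ a b h).covers = C₁.covers ∪ C₂.covers := by
  have h2 := C₁.two_le
  have h3 := C₂.two_le
  ext x
  constructor
  · rintro ⟨i, rfl⟩
    show mergePts C₁ C₂ a b i ∈ _
    unfold mergePts
    split_ifs with hc
    · exact Or.inl ⟨_, rfl⟩
    · exact Or.inr ⟨_, rfl⟩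
  · rintro (⟨j, rfl⟩ | ⟨j, rfl⟩)
    · refine ⟨(j - a) % (C₁.k:ℤ), ?_⟩
      have hk1 : (0:ℤ) < C₁.k := by omega
      set t := (j - a) % (C₁.k:ℤ) with ht
      have ht0 : 0 ≤ t := Int.emod_nonneg _ (by omega)
      have htk : t < (C₁.k:ℤ) := Int.emod_lt_of_pos _ hk1
      show mergePts C₁ C₂ a b t = C₁.pts j
      rw [mergePts_left C₁ C₂ a b h t ht0 htk.le]
      apply C₁.pts_congr
      calc (a + t) % (C₁.k:ℤ) = (a % (C₁.k:ℤ) + t % (C₁.k:ℤ)) % (C₁.k:ℤ) := Int.add_emod _ _ _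
        _ = (a % (C₁.k:ℤ) + (j-a) % (C₁.k:ℤ)) % (C₁.k:ℤ) := by
            rw [ht, Int.emod_emod_of_dvd _ dvd_rfl]
        _ = (a + (j-a)) % (C₁.k:ℤ) := (Int.add_emod _ _ _).symm
        _ = j % (C₁.k:ℤ) := by ring_nf
    · refine ⟨(C₁.k:ℤ) + (j - b) % (C₂.k:ℤ), ?_⟩
      have hk2 : (0:ℤ) < C₂.k := by omega
      set t := (j - b) % (C₂.k:ℤ) with ht
      have ht0 : 0 ≤ t := Int.emod_nonneg _ (by omega)
      have htk : t < (C₂.k:ℤ) := Int.emod_lt_of_pos _ hk2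
      show mergePts C₁ C₂ a b ((C₁.k:ℤ) + t) = C₂.pts j
      rw [mergePts_right C₁ C₂ a b h ((C₁.k:ℤ) + t) (by omega) (by omega),
        show b + ((C₁.k:ℤ) + t) - C₁.k = b + t from by ring]
      apply C₂.pts_congr
      calc (b + t) % (C₂.k:ℤ) = (b % (C₂.k:ℤ) + t % (C₂.k:ℤ)) % (C₂.k:ℤ) := Int.add_emod _ _ _
        _ = (b % (C₂.k:ℤ) + (j-b) % (C₂.k:ℤ)) % (C₂.k:ℤ) := by
            rw [ht, Int.emod_emod_of_dvd _ dvd_rfl]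
        _ = (b + (j-b)) % (C₂.k:ℤ) := (Int.add_emod _ _ _).symm
        _ = j % (C₂.k:ℤ) := by ring_nf

lemma mergeCycle_turnCost_left (h : C₁.pts a = C₂.pts b) (i : ℤ)
    (h1 : 1 ≤ i) (h2 : i ≤ (C₁.k:ℤ) - 1) :
    (mergeCycle C₁ C₂ a b h).turnCost i = C₁.turnCost (a + i) := by
  have hk2 := C₂.two_le
  have p1 : (mergeCycle C₁ C₂ a b h).pts (i-1) = C₁.pts (a+i-1) :=
    (mergePts_left C₁ C₂ a b h (i-1) (by omega) (by omega)).trans (congrArg C₁.pts (by ring))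
  have p2 : (mergeCycle C₁ C₂ a b h).pts i = C₁.pts (a+i) :=
    mergePts_left C₁ C₂ a b h i (by omega) (by omega)
  have p3 : (mergeCycle C₁ C₂ a b h).pts (i+1) = C₁.pts (a+i+1) :=
    (mergePts_left C₁ C₂ a b h (i+1) (by omega) (by omega)).trans (congrArg C₁.pts (by ring))
  rw [turnCost_eq_cost, turnCost_eq_cost, p1, p2, p3]

lemma mergeCycle_turnCost_right (h : C₁.pts a = C₂.pts b) (i : ℤ)
    (h1 : (C₁.k:ℤ)+1 ≤ i) (h2 : i ≤ (C₁.k:ℤ) + C₂.k - 1) :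
    (mergeCycle C₁ C₂ a b h).turnCost i = C₂.turnCost (b + i - C₁.k) := by
  have p1 : (mergeCycle C₁ C₂ a b h).pts (i-1) = C₂.pts (b+i-C₁.k-1) :=
    (mergePts_right C₁ C₂ a b h (i-1) (by omega) (by omega)).trans (congrArg C₂.pts (by ring))
  have p2 : (mergeCycle C₁ C₂ a b h).pts i = C₂.pts (b+i-C₁.k) :=
    mergePts_right C₁ C₂ a b h i (by omega) (by omega)
  have p3 : (mergeCycle C₁ C₂ a b h).pts (i+1) = C₂.pts (b+i-C₁.k+1) :=
    (mergePts_right C₁ C₂ a b h (i+1) (by omega) (by omega)).trans (congrArg C₂.pts (by ring))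
  rw [turnCost_eq_cost, turnCost_eq_cost, p1, p2, p3]

lemma mergeCycle_turnCost_zero (h : C₁.pts a = C₂.pts b) :
    (mergeCycle C₁ C₂ a b h).turnCost 0
      = cost (C₂.pts b - C₂.pts (b-1)) (C₁.pts (a+1) - C₁.pts a) := by
  have hk1 := C₁.two_le
  have hk2 := C₂.two_le
  have pm : (mergeCycle C₁ C₂ a b h).pts (0-1) = C₂.pts (b-1) := by
    have e : mergePts C₁ C₂ a b (0-1 : ℤ) = mergePts C₁ C₂ a b ((C₁.k:ℤ)+C₂.k-1) := by
      apply mergePts_congr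
      rw [show (C₁.k:ℤ)+C₂.k-1 = (0-1) + ((C₁.k:ℤ)+C₂.k)*1 from by ring,
        Int.add_mul_emod_self_left]
    show mergePts C₁ C₂ a b (0-1 : ℤ) = C₂.pts (b-1)
    rw [e, mergePts_right C₁ C₂ a b h _ (by omega) (by omega),
      show b + ((C₁.k:ℤ)+C₂.k-1) - C₁.k = (b-1) + 1*C₂.k from by ring, C₂.pts_add_mul]
  have p0 : (mergeCycle C₁ C₂ a b h).pts 0 = C₁.pts a :=
    (mergePts_left C₁ C₂ a b h 0 le_rfl (by omega)).trans (congrArg C₁.pts (add_zero a))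
  have p1 : (mergeCycle C₁ C₂ a b h).pts (0+1) = C₁.pts (a+1) :=
    (mergePts_left C₁ C₂ a b h (0+1) (by norm_num) (by omega)).trans (congrArg C₁.pts (by ring))
  rw [turnCost_eq_cost, pm, p0, p1, h]

lemma mergeCycle_turnCost_mid (h : C₁.pts a = C₂.pts b) :
    (mergeCycle C₁ C₂ a b h).turnCost (C₁.k:ℤ)
      = cost (C₁.pts a - C₁.pts (a-1)) (C₂.pts (b+1) - C₂.pts b) := by
  have hk1 := C₁.two_le
  have hk2 := C₂.two_le
  have pm : (mergeCycle C₁ C₂ a b h).pts ((C₁.k:ℤ)-1) = C₁.pts (a-1) :=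
    (mergePts_left C₁ C₂ a b h ((C₁.k:ℤ)-1) (by omega) (by omega)).trans (by
      rw [show a + ((C₁.k:ℤ)-1) = (a-1) + C₁.k from by ring, C₁.periodic])
  have p0 : (mergeCycle C₁ C₂ a b h).pts (C₁.k:ℤ) = C₂.pts b :=
    (mergePts_right C₁ C₂ a b h (C₁.k:ℤ) le_rfl (by omega)).trans (congrArg C₂.pts (by ring))
  have p1 : (mergeCycle C₁ C₂ a b h).pts ((C₁.k:ℤ)+1) = C₂.pts (b+1) :=
    (mergePts_right C₁ C₂ a b h ((C₁.k:ℤ)+1) (by omega) (by omega)).trans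
      (congrArg C₂.pts (by ring))
  rw [turnCost_eq_cost, pm, p0, p1, ← h]

lemma mergeCycle_turns (h : C₁.pts a = C₂.pts b)
    (hcost : cost (C₂.pts b - C₂.pts (b-1)) (C₁.pts (a+1) - C₁.pts a) +
      cost (C₁.pts a - C₁.pts (a-1)) (C₂.pts (b+1) - C₂.pts b)
      ≤ C₁.turnCost a + C₂.turnCost b + 2) :
    (mergeCycle C₁ C₂ a b h).turns ≤ C₁.turns + C₂.turns + 2 := by
  obtain ⟨m₁, hm₁⟩ : ∃ m, C₁.k = m + 1 := ⟨C₁.k - 1, by have := C₁.two_le; omega⟩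
  obtain ⟨m₂, hm₂⟩ : ∃ m, C₂.k = m + 1 := ⟨C₂.k - 1, by have := C₂.two_le; omega⟩
  have ht1 : C₁.turns = (∑ i ∈ Finset.range m₁, C₁.turnCost (a + ((i:ℤ)+1))) + C₁.turnCost a := by
    unfold GridCycle.turns
    rw [← window_sum C₁.turnCost C₁.k C₁.turnCost_periodic a]
    conv_lhs => rw [hm₁]
    rw [Finset.sum_range_succ']
    push_cast [add_zero]
    norm_num
  have ht2 : C₂.turns = (∑ i ∈ Finset.range m₂, C₂.turnCost (b + ((i:ℤ)+1))) + C₂.turnCost b := by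
    unfold GridCycle.turns
    rw [← window_sum C₂.turnCost C₂.k C₂.turnCost_periodic b]
    conv_lhs => rw [hm₂]
    rw [Finset.sum_range_succ']
    push_cast [add_zero]
    norm_num
  have htM : (mergeCycle C₁ C₂ a b h).turns
      = (∑ i ∈ Finset.range C₁.k, (mergeCycle C₁ C₂ a b h).turnCost (i:ℤ))
        + ∑ i ∈ Finset.range C₂.k, (mergeCycle C₁ C₂ a b h).turnCost ((C₁.k + i : ℕ):ℤ) := by
    unfold GridCycle.turns
    exact Finset.sum_range_add _ _ _
  have hA : ∑ i ∈ Finset.range C₁.k, (mergeCycle C₁ C₂ a b h).turnCost (i:ℤ)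
      = (mergeCycle C₁ C₂ a b h).turnCost 0
        + ∑ i ∈ Finset.range m₁, C₁.turnCost (a + ((i:ℤ)+1)) := by
    conv_lhs => rw [hm₁]
    rw [Finset.sum_range_succ', add_comm]
    push_cast [add_zero]
    congr 1
    apply Finset.sum_congr rfl; intro i hi
    have hi' := Finset.mem_range.mp hi
    rw [mergeCycle_turnCost_left C₁ C₂ a b h ((i:ℤ)+1) (by omega) (by omega)]
  have hB : ∑ i ∈ Finset.range C₂.k, (mergeCycle C₁ C₂ a b h).turnCost ((C₁.k + i : ℕ):ℤ)
      = (mergeCycle C₁ C₂ a b h).turnCost (C₁.k:ℤ)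
        + ∑ i ∈ Finset.range m₂, C₂.turnCost (b + ((i:ℤ)+1)) := by
    conv_lhs => rw [hm₂]
    rw [Finset.sum_range_succ', add_comm]
    push_cast [add_zero]
    congr 1
    apply Finset.sum_congr rfl; intro i hi
    have hi' := Finset.mem_range.mp hi
    rw [mergeCycle_turnCost_right C₁ C₂ a b h ((C₁.k:ℤ) + ((i:ℤ)+1)) (by omega) (by omega)]
    congr 1; ring
  have hj : (mergeCycle C₁ C₂ a b h).turnCost 0 + (mergeCycle C₁ C₂ a b h).turnCost (C₁.k:ℤ)
      ≤ C₁.turnCost a + C₂.turnCost b + 2 := by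
    rw [mergeCycle_turnCost_zero, mergeCycle_turnCost_mid]; exact hcost
  omega


end Merge


lemma merge_at (C₁ C₂ : GridCycle) (a b : ℤ) (h : C₁.pts a = C₂.pts b)
    (hcost : cost (C₂.pts b - C₂.pts (b-1)) (C₁.pts (a+1) - C₁.pts a) +
      cost (C₁.pts a - C₁.pts (a-1)) (C₂.pts (b+1) - C₂.pts b)
      ≤ C₁.turnCost a + C₂.turnCost b + 2) :
    ∃ C : GridCycle, C.covers = C₁.covers ∪ C₂.covers ∧
      C.turns ≤ C₁.turns + C₂.turns + 2 :=
  ⟨mergeCycle C₁ C₂ a b h, mergeCycle_covers C₁ C₂ a b h, mergeCycle_turns C₁ C₂ a b h hcost⟩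

/-- Merging two intersecting cycles: if cycles `C₁`, `C₂` share a pixel `p`,
there is a single cycle covering exactly the union of their covered pixel sets
with at most `t₁ + t₂ + 2` turns. -/
theorem merge_intersecting_cycles (C₁ C₂ : GridCycle) (p : Pixel)
    (hp₁ : p ∈ C₁.covers) (hp₂ : p ∈ C₂.covers) :
    ∃ C : GridCycle, C.covers = C₁.covers ∪ C₂.covers ∧
      C.turns ≤ C₁.turns + C₂.turns + 2 := by
  obtain ⟨a, ha⟩ := hp₁
  obtain ⟨b, hb⟩ := hp₂
  have h : C₁.pts a = C₂.pts b := ha.trans hb.symm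
  have hu : C₁.pts a - C₁.pts (a-1) = ((1:ℤ),(0:ℤ)) ∨ C₁.pts a - C₁.pts (a-1) = (-1,0) ∨
      C₁.pts a - C₁.pts (a-1) = (0,1) ∨ C₁.pts a - C₁.pts (a-1) = (0,-1) := by
    have h' := C₁.adj (a-1)
    rw [sub_add_cancel] at h'
    exact unitVec_cases h'
  have hv := unitVec_cases (C₁.adj a)
  have hw : C₂.pts b - C₂.pts (b-1) = ((1:ℤ),(0:ℤ)) ∨ C₂.pts b - C₂.pts (b-1) = (-1,0) ∨
      C₂.pts b - C₂.pts (b-1) = (0,1) ∨ C₂.pts b - C₂.pts (b-1) = (0,-1) := by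
    have h' := C₂.adj (b-1)
    rw [sub_add_cancel] at h'
    exact unitVec_cases h'
  have hx := unitVec_cases (C₂.adj b)
  rcases key (C₁.pts a - C₁.pts (a-1)) (C₁.pts (a+1) - C₁.pts a)
      (C₂.pts b - C₂.pts (b-1)) (C₂.pts (b+1) - C₂.pts b) hu hv hw hx with hk | hk
  · exact merge_at C₁ C₂ a b h (by rw [turnCost_eq_cost, turnCost_eq_cost]; exact hk)
  · have h' : C₁.pts a = C₂.rev.pts (-b) := by rw [C₂.rev_pts, neg_neg]; exact h
    obtain ⟨C, hc1, hc2⟩ := merge_at C₁ C₂.rev a (-b) h' (by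
      rw [show C₂.rev.pts (-b) = C₂.pts b from by rw [C₂.rev_pts, neg_neg],
        show C₂.rev.pts (-b-1) = C₂.pts (b+1) from by rw [C₂.rev_pts]; congr 1; ring,
        show C₂.rev.pts (-b+1) = C₂.pts (b-1) from by rw [C₂.rev_pts]; congr 1; ring,
        show C₂.rev.turnCost (-b) = C₂.turnCost b from by rw [C₂.rev_turnCost, neg_neg],
        turnCost_eq_cost, turnCost_eq_cost,
        show C₂.pts b - C₂.pts (b+1) = -(C₂.pts (b+1) - C₂.pts b) from (neg_sub _ _).symm,
        show C₂.pts (b-1) - C₂.pts b = -(C₂.pts b - C₂.pts (b-1)) from (neg_sub _ _).symm]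
      exact hk)
    rw [C₂.rev_covers] at hc1
    rw [C₂.rev_turns] at hc2
    exact ⟨C, hc1, hc2⟩
end

section
/- Let C₁ and C₂ be cycles with t₁ and t₂ turns whose covered pixel sets are disjoint, and suppose there exist pixels p₁ covered by C₁ and p₂ covered by C₂ that are adjacent. Then there exists a single cycle covering the union of the pixel sets covered by C₁ and C₂ that has at most t₁ + t₂ + 2 turns. -/
namespace MergeAux


def cost (a b : Pixel) : ℕ := if b = a then 0 else if b = -a then 2 else 1

def IsDir (x : Pixel) : Prop := x = (1,0) ∨ x = (-1,0) ∨ x = (0,1) ∨ x = (0,-1)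

lemma adjacent_iff {p q : Pixel} : Adjacent p q ↔ IsDir (q - p) := by
  obtain ⟨x, y⟩ := p; obtain ⟨z, w⟩ := q
  simp only [Adjacent, IsDir, Prod.mk_sub_mk, Prod.mk.injEq, Int.abs_eq_natAbs]
  omega

lemma adjacent_symm {p q : Pixel} (h : Adjacent p q) : Adjacent q p := by
  unfold Adjacent at *; rw [abs_sub_comm, add_comm, abs_sub_comm q.2]; rw [add_comm] at h; exact h

-- D3 : unconditional +2 bound
lemma D3 {u v d : Pixel} (hu : IsDir u) (hv : IsDir v) (hd : IsDir d) :
    cost u d + cost (-d) v ≤ cost u v + 2 := by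
  rcases hu with rfl|rfl|rfl|rfl <;> rcases hv with rfl|rfl|rfl|rfl <;>
    rcases hd with rfl|rfl|rfl|rfl <;> decide

lemma D3' {w w' d : Pixel} (hw : IsDir w) (hw' : IsDir w') (hd : IsDir d) :
    cost d w + cost w' (-d) ≤ cost w' w + 2 := by
  rcases hw with rfl|rfl|rfl|rfl <;> rcases hw' with rfl|rfl|rfl|rfl <;>
    rcases hd with rfl|rfl|rfl|rfl <;> decide

lemma D1 {u v d : Pixel} (hu : IsDir u) (hv : IsDir v) (hd : IsDir d)
    (h1 : u ≠ -d) (h2 : v ≠ d) (h3 : u ≠ v) :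
    cost u d + cost (-d) v ≤ cost u v := by
  rcases hu with rfl|rfl|rfl|rfl <;> rcases hv with rfl|rfl|rfl|rfl <;>
    rcases hd with rfl|rfl|rfl|rfl <;> simp_all <;> decide

lemma D2 {w w' d : Pixel} (hw : IsDir w) (hw' : IsDir w') (hd : IsDir d)
    (h1 : w ≠ -d) (h2 : w' ≠ d) (h3 : w' ≠ w) :
    cost d w + cost w' (-d) ≤ cost w' w := by
  rcases hw with rfl|rfl|rfl|rfl <;> rcases hw' with rfl|rfl|rfl|rfl <;>
    rcases hd with rfl|rfl|rfl|rfl <;> simp_all <;> decide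

lemma unit_perp {d x : Pixel} (hd : IsDir d) (hx : IsDir x) (h1 : x ≠ d) (h2 : x ≠ -d) :
    x = (-d.2, d.1) ∨ x = -((-d.2, d.1) : Pixel) := by
  rcases hd with rfl|rfl|rfl|rfl <;> rcases hx with rfl|rfl|rfl|rfl <;> simp_all <;> decide

lemma perp_dir {d : Pixel} (hd : IsDir d) : IsDir ((-d.2, d.1) : Pixel) := by
  rcases hd with rfl|rfl|rfl|rfl <;> simp [IsDir]




lemma turnCost_eq (C : GridCycle) (i : ℤ) :
    C.turnCost i = cost (C.pts i - C.pts (i - 1)) (C.pts (i + 1) - C.pts i) := rfl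

lemma pts_add_mul (C : GridCycle) (i : ℤ) (n : ℤ) : C.pts (i + n * C.k) = C.pts i := by
  induction n using Int.induction_on with
  | zero => simp
  | succ m ih =>
      have h : i + ((m : ℤ) + 1) * C.k = (i + m * C.k) + C.k := by ring
      rw [h, C.periodic, ih]
  | pred m ih =>
      have h : i + (-(m : ℤ)) * C.k = (i + (-(m : ℤ) - 1) * C.k) + C.k := by ring
      rw [← ih, h, C.periodic]

lemma pts_emod (C : GridCycle) (t : ℤ) : C.pts (t % C.k) = C.pts t := by
  conv_rhs => rw [show t = t % C.k + (t / C.k) * C.k by rw [mul_comm]; exact (Int.emod_add_mul_ediv t C.k).symm]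
  rw [pts_add_mul]

lemma covers_finite (C : GridCycle) : C.covers.Finite := by
  apply Set.Finite.subset ((Set.finite_Ico (0:ℤ) C.k).image C.pts)
  rintro x ⟨t, rfl⟩
  have hk : (0:ℤ) < C.k := by exact_mod_cast Nat.lt_of_lt_of_le Nat.zero_lt_two C.two_le
  exact ⟨t % C.k, ⟨Int.emod_nonneg t hk.ne', Int.emod_lt_of_pos t hk⟩, pts_emod C t⟩

lemma turnCost_periodic (C : GridCycle) (i : ℤ) : C.turnCost (i + C.k) = C.turnCost i := by
  unfold GridCycle.turnCost
  rw [show i + (C.k:ℤ) + 1 = (i+1) + C.k by ring, show i + (C.k:ℤ) - 1 = (i-1) + C.k by ring,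
    C.periodic, C.periodic, C.periodic]

lemma sum_shift (k : ℕ) (hk : 1 ≤ k) (g : ℤ → ℕ) (hg : ∀ i, g (i + k) = g i) (a : ℤ) :
    ∑ i ∈ Finset.range k, g (a + i) = ∑ i ∈ Finset.range k, g i := by
  obtain ⟨m, rfl⟩ := Nat.exists_eq_add_of_le hk
  have key : ∀ c : ℤ, ∑ i ∈ Finset.range (1+m), g ((c+1) + i) = ∑ i ∈ Finset.range (1+m), g (c + i) := by
    intro c
    rw [show 1 + m = m + 1 by omega]
    rw [Finset.sum_range_succ, Finset.sum_range_succ' (fun i => g (c + i))]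
    have h1 : ∀ i : ℕ, g (c + 1 + i) = g (c + (i+1)) := by intro i; congr 1; push_cast; ring
    have h2 : g (c + 1 + (m:ℤ)) = g (c + 0) := by
      rw [show c + 1 + (m:ℤ) = (c + 0) + ((1 + m : ℕ) : ℤ) by push_cast; ring, hg]
    rw [h2]
    simp only [h1]
    push_cast
    ring_nf
  induction a using Int.induction_on with
  | zero => simp
  | succ n ih => rw [show ((n:ℤ)+1) = (n:ℤ)+1 from rfl, key n, ih]
  | pred n ih =>
      have h := key (-(n:ℤ)-1)
      simp only [show -(n:ℤ)-1+1 = -(n:ℤ) by ring] at h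
      rw [← h, ih]

lemma turns_shift (C : GridCycle) (a : ℤ) :
    ∑ i ∈ Finset.range C.k, C.turnCost (a + i) = C.turns := by
  rw [GridCycle.turns]
  exact sum_shift C.k (by have := C.two_le; omega) C.turnCost (turnCost_periodic C) a

lemma splice (C₁ C₂ : GridCycle) (a b : ℤ)
    (hadj : Adjacent (C₁.pts a) (C₂.pts b))
    (hJ : cost (C₁.pts a - C₁.pts (a-1)) (C₂.pts b - C₁.pts a)
        + cost (C₁.pts a - C₂.pts b) (C₁.pts (a+1) - C₁.pts a)
        + cost (C₂.pts b - C₁.pts a) (C₂.pts (b+1) - C₂.pts b)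
        + cost (C₂.pts b - C₂.pts (b-1)) (C₁.pts a - C₂.pts b)
        ≤ cost (C₁.pts a - C₁.pts (a-1)) (C₁.pts (a+1) - C₁.pts a)
        + cost (C₂.pts b - C₂.pts (b-1)) (C₂.pts (b+1) - C₂.pts b) + 2) :
    ∃ C : GridCycle, C.covers = C₁.covers ∪ C₂.covers ∧
      C.turns ≤ C₁.turns + C₂.turns + 2 := by
  set n₁ := C₁.k with hn₁
  set n₂ := C₂.k with hn₂
  have hn₁2 : 2 ≤ n₁ := C₁.two_le
  have hn₂2 : 2 ≤ n₂ := C₂.two_le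
  set K : ℕ := n₁ + n₂ + 2 with hK
  have hKZ : (K:ℤ) = (n₁:ℤ) + n₂ + 2 := by rw [hK]; push_cast; ring
  have hKpos : (0:ℤ) < K := by positivity
  set f : ℤ → Pixel := fun j => if j ≤ (n₁:ℤ) then C₁.pts (a + j) else C₂.pts (b + j - n₁ - 1) with hf
  have hf1 : ∀ j : ℤ, j ≤ (n₁:ℤ) → f j = C₁.pts (a + j) := fun j hj => if_pos hj
  have hf2 : ∀ j : ℤ, (n₁:ℤ) < j → f j = C₂.pts (b + j - n₁ - 1) := fun j hj => by
    simp only [hf]; rw [if_neg (not_le.2 hj)]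
  have hmod : ∀ x : ℤ, 0 ≤ x → x < K → x % K = x := fun x h1 h2 => Int.emod_eq_of_lt h1 h2
  -- periodicity of merged pts
  have hper : ∀ i : ℤ, f ((i + K) % K) = f (i % K) := by
    intro i; congr 1; rw [show i + (K:ℤ) = i + 1 * K by ring, Int.add_mul_emod_self_right]
  -- key single values of f
  have hfk₁ : f (n₁:ℤ) = C₁.pts a := by rw [hf1 _ le_rfl, C₁.periodic]
  have hf0 : f 0 = C₁.pts a := by rw [hf1 _ (by positivity)]; norm_num
  have hfk₁1 : f ((n₁:ℤ)+1) = C₂.pts b := by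
    rw [hf2 _ (by omega), show b + ((n₁:ℤ)+1) - n₁ - 1 = b by ring]
  have hfK1 : f ((K:ℤ)-1) = C₂.pts b := by
    rw [hf2 _ (by omega), show b + ((K:ℤ)-1) - n₁ - 1 = b + n₂ by omega, C₂.periodic]
  -- adjacency of merged
  have hadj' : ∀ i : ℤ, Adjacent (f (i % K)) (f ((i + 1) % K)) := by
    intro i
    set j := i % K with hj
    have hj0 : 0 ≤ j := Int.emod_nonneg i hKpos.ne'
    have hjK : j < K := Int.emod_lt_of_pos i hKpos
    have hstep : (i + 1) % K = (j + 1) % K := by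
      conv_lhs => rw [Int.add_emod]
      rw [hmod 1 (by norm_num) (by omega), hj]
    rcases lt_or_eq_of_le (by omega : j + 1 ≤ (K:ℤ)) with hlt | heq
    · rw [hstep, hmod _ (by omega) hlt]
      rcases lt_trichotomy j (n₁:ℤ) with h1 | h1 | h1
      · rw [hf1 _ (by omega), hf1 _ (by omega), show a + (j+1) = (a + j) + 1 by ring]
        exact C₁.adj (a + j)
      · rw [h1, hfk₁, hfk₁1]; exact hadj
      · rw [hf2 _ h1, hf2 _ (by omega),
          show b + (j+1) - (n₁:ℤ) - 1 = (b + j - n₁ - 1) + 1 by ring]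
        exact C₂.adj (b + j - n₁ - 1)
    · rw [hstep, heq, Int.emod_self, show j = (K:ℤ)-1 by omega, hfK1, hf0]
      exact adjacent_symm hadj
  set C : GridCycle := ⟨K, by omega, fun i => f (i % K), hper, hadj'⟩ with hC
  have hCpts : ∀ x : ℤ, C.pts x = f (x % K) := fun _ => rfl
  have hpts1 : ∀ x : ℤ, 0 ≤ x → x ≤ (n₁:ℤ) → C.pts x = C₁.pts (a + x) := by
    intro x h1 h2; rw [hCpts, hmod _ h1 (by omega), hf1 _ h2]
  have hpts2 : ∀ x : ℤ, (n₁:ℤ) < x → x < K → C.pts x = C₂.pts (b + x - n₁ - 1) := by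
    intro x h1 h2; rw [hCpts, hmod _ (by omega) h2, hf2 _ h1]
  refine ⟨C, ?_, ?_⟩
  · -- covers
    apply Set.eq_of_subset_of_subset
    · rintro x ⟨i, rfl⟩
      have hj0 : 0 ≤ i % K := Int.emod_nonneg i hKpos.ne'
      rcases le_or_gt (i % K) (n₁:ℤ) with h | h
      · exact Or.inl ⟨a + i % K, (hf1 _ h).symm⟩
      · exact Or.inr ⟨b + i % K - n₁ - 1, (hf2 _ h).symm⟩
    · have hkk₁ : (0:ℤ) < n₁ := by exact_mod_cast (by omega : 0 < n₁)
      have hkk₂ : (0:ℤ) < n₂ := by exact_mod_cast (by omega : 0 < n₂)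
      rintro x (⟨t, rfl⟩ | ⟨t, rfl⟩)
      · refine ⟨(t - a) % n₁, ?_⟩
        have h0 : 0 ≤ (t-a) % n₁ := Int.emod_nonneg _ hkk₁.ne'
        have h1 : (t-a) % n₁ < n₁ := Int.emod_lt_of_pos _ hkk₁
        rw [hCpts, hmod _ h0 (by omega), hf1 _ (by omega)]
        rw [show a + (t-a) % n₁ = t + (-( (t-a) / n₁)) * n₁ by
          rw [Int.emod_def]; ring]
        exact pts_add_mul C₁ t _
      · refine ⟨(n₁:ℤ) + 1 + (t - b) % n₂, ?_⟩
        have h0 : 0 ≤ (t-b) % n₂ := Int.emod_nonneg _ hkk₂.ne'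
        have h1 : (t-b) % n₂ < n₂ := Int.emod_lt_of_pos _ hkk₂
        rw [hCpts, hmod _ (by omega) (by omega), hf2 _ (by omega)]
        rw [show b + ((n₁:ℤ) + 1 + (t-b) % n₂) - n₁ - 1 = t + (-( (t-b) / n₂)) * n₂ by
          rw [Int.emod_def]; ring]
        exact pts_add_mul C₂ t _
  · -- turns
    have hm1 : (-1:ℤ) % K = (K:ℤ) - 1 := by
      rw [show (-1:ℤ) = ((K:ℤ) - 1) + (-1) * K by ring, Int.add_mul_emod_self_right,
        hmod _ (by omega) (by omega)]
    have hptsK : C.pts (K:ℤ) = C₁.pts a := by rw [hCpts, Int.emod_self, hf0]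
    have hptsm1 : C.pts (-1:ℤ) = C₂.pts b := by rw [hCpts, hm1, hfK1]
    have hT0 : C.turnCost 0 = cost (C₁.pts a - C₂.pts b) (C₁.pts (a+1) - C₁.pts a) := by
      rw [turnCost_eq, show (0:ℤ) - 1 = -1 by norm_num, show (0:ℤ) + 1 = 1 by norm_num,
        hptsm1, hpts1 0 le_rfl (by omega), hpts1 1 (by norm_num) (by omega)]
      norm_num
    have hTn₁ : C.turnCost (n₁:ℤ) = cost (C₁.pts a - C₁.pts (a-1)) (C₂.pts b - C₁.pts a) := by
      rw [turnCost_eq, hpts1 (n₁:ℤ) (by positivity) le_rfl, C₁.periodic,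
        hpts1 ((n₁:ℤ)-1) (by omega) (by omega),
        show a + ((n₁:ℤ)-1) = (a-1) + n₁ by ring, C₁.periodic,
        hpts2 ((n₁:ℤ)+1) (by omega) (by omega),
        show b + ((n₁:ℤ)+1) - n₁ - 1 = b by ring]
    have hTn₁1 : C.turnCost ((n₁:ℤ)+1) = cost (C₂.pts b - C₁.pts a) (C₂.pts (b+1) - C₂.pts b) := by
      rw [turnCost_eq, show (n₁:ℤ)+1-1 = (n₁:ℤ) by ring,
        hpts1 (n₁:ℤ) (by positivity) le_rfl, C₁.periodic,
        hpts2 ((n₁:ℤ)+1) (by omega) (by omega),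
        show b + ((n₁:ℤ)+1) - n₁ - 1 = b by ring,
        hpts2 ((n₁:ℤ)+1+1) (by omega) (by omega),
        show b + ((n₁:ℤ)+1+1) - n₁ - 1 = b + 1 by ring]
    have hTK1 : C.turnCost ((K:ℤ)-1) = cost (C₂.pts b - C₂.pts (b-1)) (C₁.pts a - C₂.pts b) := by
      rw [turnCost_eq, show (K:ℤ)-1+1 = (K:ℤ) by ring, hptsK, hCpts ((K:ℤ)-1), hmod _ (by omega) (by omega), hfK1,
        hpts2 ((K:ℤ)-1-1) (by omega) (by omega),
        show b + ((K:ℤ)-1-1) - n₁ - 1 = (b-1) + n₂ by omega, C₂.periodic]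
    have hmid1 : ∀ i : ℕ, 1 ≤ i → i < n₁ → C.turnCost (i:ℤ) = C₁.turnCost (a + i) := by
      intro i h1 h2
      rw [turnCost_eq, turnCost_eq,
        hpts1 (i:ℤ) (by positivity) (by omega),
        hpts1 ((i:ℤ)-1) (by omega) (by omega),
        hpts1 ((i:ℤ)+1) (by omega) (by omega),
        show a + ((i:ℤ)-1) = (a+i) - 1 by ring, show a + ((i:ℤ)+1) = (a+i)+1 by ring]
    have hmid2 : ∀ i : ℕ, n₁+2 ≤ i → i < n₁+n₂+1 → C.turnCost (i:ℤ) = C₂.turnCost (b + i - n₁ - 1) := by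
      intro i h1 h2
      rw [turnCost_eq, turnCost_eq,
        hpts2 (i:ℤ) (by omega) (by omega),
        hpts2 ((i:ℤ)-1) (by omega) (by omega),
        hpts2 ((i:ℤ)+1) (by omega) (by omega),
        show b + ((i:ℤ)-1) - n₁ - 1 = (b+i-n₁-1) - 1 by ring,
        show b + ((i:ℤ)+1) - n₁ - 1 = (b+i-n₁-1) + 1 by ring]
    have hsing : ∀ (m : ℕ) (g : ℕ → ℕ), ∑ i ∈ Finset.Ico m (m+1), g i = g m := by
      intro m g
      rw [Finset.sum_Ico_succ_top le_rfl, Finset.Ico_self, Finset.sum_empty, zero_add]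
    set g : ℕ → ℕ := fun i => C.turnCost (i:ℤ) with hg
    have e0 : C.turns = ∑ i ∈ Finset.Ico 0 K, g i := by
      rw [show C.turns = ∑ i ∈ Finset.range K, g i from rfl, Finset.range_eq_Ico]
    have e1 : (∑ i ∈ Finset.Ico 0 1, g i) + (∑ i ∈ Finset.Ico 1 K, g i) = ∑ i ∈ Finset.Ico 0 K, g i :=
      Finset.sum_Ico_consecutive g (by omega) (by omega)
    have e2 : (∑ i ∈ Finset.Ico 1 n₁, g i) + (∑ i ∈ Finset.Ico n₁ K, g i) = ∑ i ∈ Finset.Ico 1 K, g i :=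
      Finset.sum_Ico_consecutive g (by omega) (by omega)
    have e3 : (∑ i ∈ Finset.Ico n₁ (n₁+1), g i) + (∑ i ∈ Finset.Ico (n₁+1) K, g i) = ∑ i ∈ Finset.Ico n₁ K, g i :=
      Finset.sum_Ico_consecutive g (by omega) (by omega)
    have e4 : (∑ i ∈ Finset.Ico (n₁+1) (n₁+2), g i) + (∑ i ∈ Finset.Ico (n₁+2) K, g i) = ∑ i ∈ Finset.Ico (n₁+1) K, g i :=
      Finset.sum_Ico_consecutive g (by omega) (by omega)
    have e5 : (∑ i ∈ Finset.Ico (n₁+2) (n₁+n₂+1), g i) + (∑ i ∈ Finset.Ico (n₁+n₂+1) K, g i) = ∑ i ∈ Finset.Ico (n₁+2) K, g i :=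
      Finset.sum_Ico_consecutive g (by omega) (by omega)
    have s0 : ∑ i ∈ Finset.Ico 0 1, g i = C.turnCost 0 := by
      rw [hsing 0 g]; simp [hg]
    have s1 : ∑ i ∈ Finset.Ico n₁ (n₁+1), g i = C.turnCost (n₁:ℤ) := hsing n₁ g
    have s2 : ∑ i ∈ Finset.Ico (n₁+1) (n₁+2), g i = C.turnCost ((n₁:ℤ)+1) := by
      rw [show n₁+2 = (n₁+1)+1 from rfl, hsing (n₁+1) g]
      show C.turnCost ((n₁+1:ℕ):ℤ) = _
      rw [show ((n₁+1:ℕ):ℤ) = (n₁:ℤ)+1 by push_cast; ring]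
    have s3 : ∑ i ∈ Finset.Ico (n₁+n₂+1) K, g i = C.turnCost ((K:ℤ)-1) := by
      rw [Finset.sum_Ico_eq_sum_range, show K - (n₁+n₂+1) = 1 by omega, Finset.sum_range_one]
      show C.turnCost ((n₁+n₂+1+0:ℕ):ℤ) = _
      rw [show ((n₁+n₂+1+0:ℕ):ℤ) = (K:ℤ)-1 by push_cast; omega]
    have m1 : ∑ i ∈ Finset.Ico 1 n₁, g i = ∑ i ∈ Finset.Ico 1 n₁, C₁.turnCost (a + i) :=
      Finset.sum_congr rfl fun i hi => by
        obtain ⟨hi1, hi2⟩ := Finset.mem_Ico.mp hi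
        exact hmid1 i hi1 hi2
    have m2 : ∑ i ∈ Finset.Ico (n₁+2) (n₁+n₂+1), g i = ∑ i ∈ Finset.Ico 1 n₂, C₂.turnCost (b + i) := by
      rw [Finset.sum_Ico_eq_sum_range, Finset.sum_Ico_eq_sum_range,
        show n₁+n₂+1 - (n₁+2) = n₂ - 1 by omega, show n₂ - 1 = n₂ - 1 from rfl]
      refine Finset.sum_congr rfl fun j hj => ?_
      have hj' : j < n₂ - 1 := Finset.mem_range.mp hj
      show C.turnCost ((n₁+2+j:ℕ):ℤ) = _
      rw [hmid2 (n₁+2+j) (by omega) (by omega)]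
      congr 1
      push_cast
      ring
    have t1 : C₁.turnCost a + ∑ i ∈ Finset.Ico 1 n₁, C₁.turnCost (a + i) = C₁.turns := by
      have h := turns_shift C₁ a
      rw [Finset.range_eq_Ico, Finset.sum_eq_sum_Ico_succ_bot (by omega : 0 < n₁)] at h
      simpa using h
    have t2 : C₂.turnCost b + ∑ i ∈ Finset.Ico 1 n₂, C₂.turnCost (b + i) = C₂.turns := by
      have h := turns_shift C₂ b
      rw [Finset.range_eq_Ico, Finset.sum_eq_sum_Ico_succ_bot (by omega : 0 < n₂)] at h
      simpa using h
    have c1 : C₁.turnCost a = cost (C₁.pts a - C₁.pts (a-1)) (C₁.pts (a+1) - C₁.pts a) := turnCost_eq C₁ a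
    have c2 : C₂.turnCost b = cost (C₂.pts b - C₂.pts (b-1)) (C₂.pts (b+1) - C₂.pts b) := turnCost_eq C₂ b
    omega


theorem merge_touching_cycles' (C₁ C₂ : GridCycle)
    (hdisj : Disjoint C₁.covers C₂.covers)
    (p₁ p₂ : Pixel) (hp₁ : p₁ ∈ C₁.covers) (hp₂ : p₂ ∈ C₂.covers)
    (hadj : Adjacent p₁ p₂) :
    ∃ C : GridCycle, C.covers = C₁.covers ∪ C₂.covers ∧
      C.turns ≤ C₁.turns + C₂.turns + 2 := by
  classical
  set d : Pixel := p₂ - p₁ with hd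
  have hdu : IsDir d := adjacent_iff.mp hadj
  set e : Pixel := (-d.2, d.1) with he
  have heu : IsDir e := perp_dir hdu
  by_cases H : ∃ A B : ℤ, C₂.pts B = C₁.pts A + d ∧
      (cost (C₁.pts A - C₁.pts (A-1)) (C₂.pts B - C₁.pts A)
        + cost (C₁.pts A - C₂.pts B) (C₁.pts (A+1) - C₁.pts A)
        + cost (C₂.pts B - C₁.pts A) (C₂.pts (B+1) - C₂.pts B)
        + cost (C₂.pts B - C₂.pts (B-1)) (C₁.pts A - C₂.pts B)
        ≤ cost (C₁.pts A - C₁.pts (A-1)) (C₁.pts (A+1) - C₁.pts A)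
        + cost (C₂.pts B - C₂.pts (B-1)) (C₂.pts (B+1) - C₂.pts B) + 2)
  · obtain ⟨A, B, hAB, hJ⟩ := H
    have hadjAB : Adjacent (C₁.pts A) (C₂.pts B) := by
      rw [adjacent_iff, hAB, show C₁.pts A + d - C₁.pts A = d by abel]
      exact hdu
    exact splice C₁ C₂ A B hadjAB hJ
  · exfalso
    have step : ∀ q₁ q₂ : Pixel, q₁ ∈ C₁.covers → q₂ ∈ C₂.covers → q₂ = q₁ + d →
        q₁ + e ∈ C₁.covers ∧ q₂ + e ∈ C₂.covers := by
      rintro q₁ q₂ ⟨A, rfl⟩ ⟨B, rfl⟩ hAB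
      have hnot : ¬ (cost (C₁.pts A - C₁.pts (A-1)) (C₂.pts B - C₁.pts A)
        + cost (C₁.pts A - C₂.pts B) (C₁.pts (A+1) - C₁.pts A)
        + cost (C₂.pts B - C₁.pts A) (C₂.pts (B+1) - C₂.pts B)
        + cost (C₂.pts B - C₂.pts (B-1)) (C₁.pts A - C₂.pts B)
        ≤ cost (C₁.pts A - C₁.pts (A-1)) (C₁.pts (A+1) - C₁.pts A)
        + cost (C₂.pts B - C₂.pts (B-1)) (C₂.pts (B+1) - C₂.pts B) + 2) :=
        fun hc => H ⟨A, B, hAB, hc⟩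
      set u : Pixel := C₁.pts A - C₁.pts (A-1) with hu
      set v : Pixel := C₁.pts (A+1) - C₁.pts A with hv
      set w : Pixel := C₂.pts (B+1) - C₂.pts B with hw
      set w' : Pixel := C₂.pts B - C₂.pts (B-1) with hw'
      have hud : IsDir u := by
        have h := C₁.adj (A-1); rw [show A - 1 + 1 = A by ring] at h
        exact adjacent_iff.mp h
      have hvd : IsDir v := adjacent_iff.mp (C₁.adj A)
      have hwd : IsDir w := adjacent_iff.mp (C₂.adj B)
      have hw'd : IsDir w' := by
        have h := C₂.adj (B-1); rw [show B - 1 + 1 = B by ring] at h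
        exact adjacent_iff.mp h
      have hDd : C₂.pts B - C₁.pts A = d := by rw [hAB]; abel
      have hmD : C₁.pts A - C₂.pts B = -d := by rw [hAB]; abel
      have hv_ne : v ≠ d := by
        intro hcon
        have h1 : C₁.pts (A+1) = C₂.pts B := by
          rw [hAB, ← hcon, hv]; abel
        exact Set.disjoint_left.mp hdisj ⟨A+1, rfl⟩ (h1 ▸ ⟨B, rfl⟩)
      have hu_ne : u ≠ -d := by
        intro hcon
        have h1 : C₁.pts (A-1) = C₂.pts B := by
          have h2 := sub_eq_iff_eq_add.mp (hu ▸ hcon)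
          rw [hAB, h2]; abel
        exact Set.disjoint_left.mp hdisj ⟨A-1, rfl⟩ (h1 ▸ ⟨B, rfl⟩)
      have hw_ne : w ≠ -d := by
        intro hcon
        have h1 : C₂.pts (B+1) = C₁.pts A := by
          have h2 := sub_eq_iff_eq_add.mp (hw ▸ hcon)
          rw [h2, hAB]; abel
        exact Set.disjoint_left.mp hdisj ⟨A, h1.symm⟩ ⟨B+1, rfl⟩
      have hw'_ne : w' ≠ d := by
        intro hcon
        have h1 : C₂.pts (B-1) = C₁.pts A := by
          have h2 := sub_eq_iff_eq_add.mp (hw' ▸ hcon)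
          have h3 : C₂.pts (B-1) = C₂.pts B - d := by rw [h2]; abel
          rw [h3, hAB]; abel
        exact Set.disjoint_left.mp hdisj ⟨A, h1.symm⟩ ⟨B-1, rfl⟩
      by_cases huv : u = v
      · by_cases hww : w' = w
        · constructor
          · rcases unit_perp hdu hud (huv ▸ hv_ne) hu_ne with h | h
            · exact ⟨A+1, by rw [show C₁.pts (A+1) = C₁.pts A + v by rw [hv]; abel, ← huv, h, he]⟩
            · refine ⟨A-1, ?_⟩
              have h2 : C₁.pts (A-1) = C₁.pts A - u := by rw [hu]; abel
              rw [h2, h, he]; abel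
          · have hw_ne_d : w ≠ d := hww ▸ hw'_ne
            rcases unit_perp hdu hwd hw_ne_d hw_ne with h | h
            · exact ⟨B+1, by rw [show C₂.pts (B+1) = C₂.pts B + w by rw [hw]; abel, h, he]⟩
            · refine ⟨B-1, ?_⟩
              have h2 : C₂.pts (B-1) = C₂.pts B - w' := by rw [hw']; abel
              rw [h2, hww, h, he]; abel
        · exact absurd (by
            rw [hDd, hmD]
            have I1 := D3 hud hvd hdu
            have I2 := D2 hwd hw'd hdu hw_ne hw'_ne hww
            omega) hnot
      · exact absurd (by
          rw [hDd, hmD]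
          have I1 := D1 hud hvd hdu hu_ne hv_ne huv
          have I2 := D3' hwd hw'd hdu
          omega) hnot
    have hp₂₁ : p₂ = p₁ + d := by rw [hd]; abel
    have all : ∀ n : ℕ, (p₁ + n • e ∈ C₁.covers ∧ p₂ + n • e ∈ C₂.covers) := by
      intro n; induction n with
      | zero => simpa using ⟨hp₁, hp₂⟩
      | succ m ih =>
        have h := step _ _ ih.1 ih.2 (by rw [hp₂₁]; abel)
        constructor
        · rw [succ_nsmul, ← add_assoc]; exact h.1
        · rw [succ_nsmul, ← add_assoc]; exact h.2
    have hinj : Function.Injective (fun n : ℕ => p₁ + n • e) := by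
      intro m n hmn
      simp only [add_right_inj] at hmn
      have hfst := congrArg Prod.fst hmn
      have hsnd := congrArg Prod.snd hmn
      rcases heu with h4 | h4 | h4 | h4 <;>
        rw [h4] at hfst hsnd <;>
        simp [Prod.smul_fst, Prod.smul_snd, nsmul_eq_mul] at hfst hsnd ⊢ <;>
        omega
    exact (covers_finite C₁).not_infinite
      (Set.infinite_of_injective_forall_mem hinj (fun n => (all n).1))

end MergeAux

/-- Merging two touching cycles: if cycles `C₁`, `C₂` have disjoint covered
pixel sets but contain adjacent pixels `p₁`, `p₂`, there is a single cycle
covering the union of their covered pixel sets with at most `t₁ + t₂ + 2`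
turns. -/
theorem merge_touching_cycles (C₁ C₂ : GridCycle)
    (hdisj : Disjoint C₁.covers C₂.covers)
    (p₁ p₂ : Pixel) (hp₁ : p₁ ∈ C₁.covers) (hp₂ : p₂ ∈ C₂.covers)
    (hadj : Adjacent p₁ p₂) :
    ∃ C : GridCycle, C.covers = C₁.covers ∪ C₂.covers ∧
      C.turns ≤ C₁.turns + C₂.turns + 2 :=
  MergeAux.merge_touching_cycles' C₁ C₂ hdisj p₁ p₂ hp₁ hp₂ hadj
end
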